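/- Let G be a group whose derived subgroup G′ = [G,G] has a complement in G, i.e. there is a subgroup B ≤ G with G = G′B and G′ ∩ B = 1. Then ∇(G) is isomorphic to ∇(G_ab), where G_ab = G/G′ is the abelianization of G. -/

import Mathlib

/- Nonabelian tensor square framework (Brown–Loday). -/

namespace NATensor

variable (G : Type*) [Group G]

/-- The relator set for the nonabelian tensor square of `G`:
`g g' ⊗ h = (ᵍg' ⊗ ᵍh)(g ⊗ h)` and `g ⊗ h h' = (g ⊗ h)(ʰg ⊗ ʰh')`. -/
def rels : Set (FreeGroup (G × G)) :=
  {r | (∃ g g' h : G,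
          r = FreeGroup.of (g * g', h) *
              (FreeGroup.of (g * g' * g⁻¹, g * h * g⁻¹) * FreeGroup.of (g, h))⁻¹) ∨
       (∃ g h h' : G,
          r = FreeGroup.of (g, h * h') *
              (FreeGroup.of (g, h) * FreeGroup.of (h * g * h⁻¹, h * h' * h⁻¹))⁻¹)}

/-- The nonabelian tensor square `G ⊗ G`. -/
abbrev TS := PresentedGroup (rels G)

variable {G}

/-- The generator `g ⊗ h` of the nonabelian tensor square. -/
def tmul (g h : G) : TS G := PresentedGroup.of (g, h)

lemma mk_rel_eq_one {r : FreeGroup (G × G)} (hr : r ∈ rels G) :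
    (PresentedGroup.mk (rels G) r : TS G) = 1 :=
  (QuotientGroup.eq_one_iff r).mpr (Subgroup.subset_normalClosure hr)

lemma tmul_rel₁ (g g' h : G) :
    tmul (g * g') h = tmul (g * g' * g⁻¹) (g * h * g⁻¹) * tmul g h := by
  have h1 := mk_rel_eq_one (G := G) (Or.inl ⟨g, g', h, rfl⟩)
  simp only [map_mul, map_inv, mul_inv_eq_one] at h1
  exact h1

lemma tmul_rel₂ (g h h' : G) :
    tmul g (h * h') = tmul g h * tmul (h * g * h⁻¹) (h * h' * h⁻¹) := by
  have h1 := mk_rel_eq_one (G := G) (Or.inr ⟨g, h, h', rfl⟩)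
  simp only [map_mul, map_inv, mul_inv_eq_one] at h1
  exact h1

variable (G)

/-- The homomorphism `κ : G ⊗ G → G`, `g ⊗ h ↦ [g,h] = g h g⁻¹ h⁻¹` (its image is `[G,G]`). -/
def kappa : TS G →* G :=
  PresentedGroup.toGroup (f := fun x : G × G => x.1 * x.2 * x.1⁻¹ * x.2⁻¹) (by
    rintro r (⟨g, g', h, rfl⟩ | ⟨g, h, h', rfl⟩) <;>
      simp only [map_mul, map_inv, FreeGroup.lift_apply_of] <;> group)

variable {G}

@[simp] lemma kappa_tmul (g h : G) : kappa G (tmul g h) = g * h * g⁻¹ * h⁻¹ :=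
  PresentedGroup.toGroup.of _

variable (G)

/-- `J(G) = ker κ ≅ π₃(SK(G,1))`. -/
def J : Subgroup (TS G) := (kappa G).ker

/-- `∇(G)`: the (normal) subgroup of `G ⊗ G` generated by the elements `x ⊗ x`. -/
def nabla : Subgroup (TS G) :=
  Subgroup.normalClosure {t | ∃ x : G, t = tmul x x}

/-- `Δ(G)`: the (normal) subgroup of `G ⊗ G` generated by the `(x ⊗ y)(y ⊗ x)`. -/
def delta : Subgroup (TS G) :=
  Subgroup.normalClosure {t | ∃ x y : G, t = tmul x y * tmul y x}

instance : (nabla G).Normal := Subgroup.normalClosure_normal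

instance : (delta G).Normal := Subgroup.normalClosure_normal

/-- The exterior square `G ∧ G = (G ⊗ G)/∇(G)`. -/
abbrev ES := TS G ⧸ nabla G

/-- The symmetric square `G ⊗̃ G = (G ⊗ G)/Δ(G)`. -/
abbrev SS := TS G ⧸ delta G

variable {G}

/-- The element `g ∧ h` of the exterior square. -/
def emul (g h : G) : ES G := QuotientGroup.mk' (nabla G) (tmul g h)

/-- The image of `g ⊗ h` in the symmetric square. -/
def smul (g h : G) : SS G := QuotientGroup.mk' (delta G) (tmul g h)

variable {H : Type*} [Group H]

/-- The induced homomorphism `G ⊗ G → H ⊗ H` of a homomorphism `f : G → H`. -/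
def tmap (f : G →* H) : TS G →* TS H :=
  PresentedGroup.toGroup (f := fun x : G × G => tmul (f x.1) (f x.2)) (by
    rintro r (⟨g, g', h, rfl⟩ | ⟨g, h, h', rfl⟩) <;>
      simp only [map_mul, map_inv, FreeGroup.lift_apply_of, mul_inv_eq_one]
    · rw [tmul_rel₁]
    · rw [tmul_rel₂])

@[simp] lemma tmap_tmul (f : G →* H) (g h : G) :
    tmap f (tmul g h) = tmul (f g) (f h) :=
  PresentedGroup.toGroup.of _

lemma nabla_le_comap_nabla (f : G →* H) :
    nabla G ≤ MonoidHom.ker ((QuotientGroup.mk' (nabla H)).comp (tmap f)) := by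
  refine Subgroup.normalClosure_le_normal ?_
  rintro _ ⟨y, rfl⟩
  simp only [SetLike.mem_coe, MonoidHom.mem_ker, MonoidHom.comp_apply, tmap_tmul,
    QuotientGroup.mk'_apply, QuotientGroup.eq_one_iff]
  exact Subgroup.subset_normalClosure ⟨f y, rfl⟩

lemma delta_le_comap_delta (f : G →* H) :
    delta G ≤ MonoidHom.ker ((QuotientGroup.mk' (delta H)).comp (tmap f)) := by
  refine Subgroup.normalClosure_le_normal ?_
  rintro _ ⟨x, y, rfl⟩
  simp only [SetLike.mem_coe, MonoidHom.mem_ker, MonoidHom.comp_apply, map_mul, tmap_tmul,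
    QuotientGroup.mk'_apply, ← QuotientGroup.mk_mul, QuotientGroup.eq_one_iff]
  exact Subgroup.subset_normalClosure ⟨f x, f y, rfl⟩

/-- The induced homomorphism `G ∧ G → H ∧ H` of a homomorphism `f : G → H`. -/
def emap (f : G →* H) : ES G →* ES H :=
  QuotientGroup.lift (nabla G) ((QuotientGroup.mk' (nabla H)).comp (tmap f))
    (fun x hx => MonoidHom.mem_ker.mp (nabla_le_comap_nabla f hx))

@[simp] lemma emap_emul (f : G →* H) (g h : G) :
    emap f (emul g h) = emul (f g) (f h) := by
  show QuotientGroup.mk' (nabla H) (tmap f (tmul g h)) = _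
  rw [tmap_tmul]
  rfl

/-- The induced homomorphism `G ⊗̃ G → H ⊗̃ H` of a homomorphism `f : G → H`. -/
def smap (f : G →* H) : SS G →* SS H :=
  QuotientGroup.lift (delta G) ((QuotientGroup.mk' (delta H)).comp (tmap f))
    (fun x hx => MonoidHom.mem_ker.mp (delta_le_comap_delta f hx))

variable (G)

lemma nabla_le_ker_kappa : nabla G ≤ (kappa G).ker := by
  refine Subgroup.normalClosure_le_normal ?_
  rintro _ ⟨x, rfl⟩
  simp only [SetLike.mem_coe, MonoidHom.mem_ker, kappa_tmul]
  group

/-- The homomorphism `κ' : G ∧ G → G`, `g ∧ h ↦ [g,h]` (its image is `[G,G]`). -/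
def kappa' : ES G →* G :=
  QuotientGroup.lift (nabla G) (kappa G)
    (fun x hx => MonoidHom.mem_ker.mp (nabla_le_ker_kappa G hx))

/-- The Schur multiplier `M(G) = ker κ' ≅ H₂(G)`. -/
def M : Subgroup (ES G) := (kappa' G).ker

/-- `J̃(G) = J(G)/Δ(G) ≅ π₂ˢ(K(G,1))`, realized as the image of `J(G)` in `G ⊗̃ G`. -/
def Jt : Subgroup (SS G) := Subgroup.map (QuotientGroup.mk' (delta G)) (J G)

/-- `∇(G)/Δ(G)`, realized as the image of `∇(G)` in `G ⊗̃ G`. -/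
def nablaBar : Subgroup (SS G) := Subgroup.map (QuotientGroup.mk' (delta G)) (nabla G)



/-! ### Auxiliary lemmas -/

section Aux
variable {G}

lemma tm_congr {a b a' b' : G} (ha : a = a') (hb : b = b') : tmul a b = tmul a' b' := by
  rw [ha, hb]

lemma tmul_one_left (h : G) : tmul (1 : G) h = 1 := by
  have h1 : tmul (1:G) h = tmul 1 h * tmul 1 h := by
    simpa using tmul_rel₁ (1:G) 1 h
  exact (left_eq_mul.mp h1)

lemma tmul_one_right (g : G) : tmul g (1 : G) = 1 := by
  have h1 : tmul g (1:G) = tmul g 1 * tmul g 1 := by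
    simpa using tmul_rel₂ g 1 1
  exact (left_eq_mul.mp h1)

lemma tmul_inv_left (g h : G) : tmul g⁻¹ (g * h * g⁻¹) = (tmul g h)⁻¹ := by
  have h1 := tmul_rel₁ g g⁻¹ h
  rw [tm_congr (show (g * g⁻¹ * g⁻¹ : G) = g⁻¹ by group) (rfl : g * h * g⁻¹ = g * h * g⁻¹),
    show (g * g⁻¹ : G) = 1 by group, tmul_one_left] at h1
  exact eq_inv_of_mul_eq_one_left h1.symm

lemma tmul_inv_right (g h : G) : tmul (h * g * h⁻¹) h⁻¹ = (tmul g h)⁻¹ := by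
  have h1 := tmul_rel₂ g h h⁻¹
  rw [tm_congr (rfl : h * g * h⁻¹ = h * g * h⁻¹) (show (h * h⁻¹ * h⁻¹ : G) = h⁻¹ by group),
    show (h * h⁻¹ : G) = 1 by group, tmul_one_right] at h1
  exact eq_inv_of_mul_eq_one_right h1.symm

end Aux


section Aux2
variable {G}

lemma key_rel (g h a b : G) :
    tmul (g*h*a*(g*h)⁻¹) (g*h*b*(g*h)⁻¹) * tmul g h
      = tmul g h * tmul (h*g*a*(h*g)⁻¹) (h*g*b*(h*g)⁻¹) := by
  have a1 := tmul_rel₁ g a (h*b)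
  have a3 := tmul_rel₂ (g*a*g⁻¹) (g*h*g⁻¹) (g*b*g⁻¹)
  have a2 := tmul_rel₂ g h b
  rw [tm_congr (rfl : (g*a*g⁻¹ : G) = g*a*g⁻¹)
      (show (g*(h*b)*g⁻¹ : G) = (g*h*g⁻¹)*(g*b*g⁻¹) by group), a3, a2,
    tm_congr (show ((g*h*g⁻¹)*(g*a*g⁻¹)*(g*h*g⁻¹)⁻¹ : G) = g*h*a*(g*h)⁻¹ by group)
      (show ((g*h*g⁻¹)*(g*b*g⁻¹)*(g*h*g⁻¹)⁻¹ : G) = g*h*b*(g*h)⁻¹ by group)] at a1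
  have b1 := tmul_rel₂ (g*a) h b
  have b3 := tmul_rel₁ (h*g*h⁻¹) (h*a*h⁻¹) (h*b*h⁻¹)
  have b2 := tmul_rel₁ g a h
  rw [tm_congr (show (h*(g*a)*h⁻¹ : G) = (h*g*h⁻¹)*(h*a*h⁻¹) by group)
      (rfl : (h*b*h⁻¹ : G) = h*b*h⁻¹), b3, b2,
    tm_congr (show ((h*g*h⁻¹)*(h*a*h⁻¹)*(h*g*h⁻¹)⁻¹ : G) = h*g*a*(h*g)⁻¹ by group)
      (show ((h*g*h⁻¹)*(h*b*h⁻¹)*(h*g*h⁻¹)⁻¹ : G) = h*g*b*(h*g)⁻¹ by group)] at b1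
  have e := a1.symm.trans b1
  simp only [mul_assoc] at e
  have e2 := mul_left_cancel e
  have e3 : tmul (g*h*a*(g*h)⁻¹) (g*h*b*(g*h)⁻¹) * tmul g h * tmul (h*g*h⁻¹) (h*b*h⁻¹)
      = tmul g h * tmul (h*g*a*(h*g)⁻¹) (h*g*b*(h*g)⁻¹) * tmul (h*g*h⁻¹) (h*b*h⁻¹) := by
    simp only [mul_assoc]; exact e2
  exact mul_right_cancel e3

lemma tmul_conj (g h a b : G) :
    tmul ((g*h*g⁻¹*h⁻¹) * a * (g*h*g⁻¹*h⁻¹)⁻¹) ((g*h*g⁻¹*h⁻¹) * b * (g*h*g⁻¹*h⁻¹)⁻¹) * tmul g h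
      = tmul g h * tmul a b := by
  have h1 := key_rel g h ((h*g)⁻¹*a*(h*g)) ((h*g)⁻¹*b*(h*g))
  rw [tm_congr
      (show (g*h*((h*g)⁻¹*a*(h*g))*(g*h)⁻¹ : G) = (g*h*g⁻¹*h⁻¹) * a * (g*h*g⁻¹*h⁻¹)⁻¹ by group)
      (show (g*h*((h*g)⁻¹*b*(h*g))*(g*h)⁻¹ : G) = (g*h*g⁻¹*h⁻¹) * b * (g*h*g⁻¹*h⁻¹)⁻¹ by group),
    tm_congr (show (h*g*((h*g)⁻¹*a*(h*g))*(h*g)⁻¹ : G) = a by group)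
      (show (h*g*((h*g)⁻¹*b*(h*g))*(h*g)⁻¹ : G) = b by group)] at h1
  exact h1

lemma psi_comm (x : G) (w : TS G) : tmul x x * w = w * tmul x x := by
  have hgen : ∀ a b : G, tmul x x * tmul a b = tmul a b * tmul x x := by
    intro a b
    have h1 := tmul_conj x x a b
    rw [tm_congr (show ((x*x*x⁻¹*x⁻¹) * a * (x*x*x⁻¹*x⁻¹)⁻¹ : G) = a by group)
        (show ((x*x*x⁻¹*x⁻¹) * b * (x*x*x⁻¹*x⁻¹)⁻¹ : G) = b by group)] at h1
    exact h1.symm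
  have hhom : (MulAut.conj (tmul x x)).toMonoidHom = MonoidHom.id (TS G) := by
    apply PresentedGroup.ext
    rintro ⟨a, b⟩
    have hof : (PresentedGroup.of (a, b) : TS G) = tmul a b := rfl
    simp only [MulEquiv.coe_toMonoidHom, MulAut.conj_apply, MonoidHom.id_apply, hof]
    rw [mul_inv_eq_iff_eq_mul]
    exact hgen a b
  have h2 := DFunLike.congr_fun hhom w
  simp only [MulEquiv.coe_toMonoidHom, MulAut.conj_apply, MonoidHom.id_apply] at h2
  calc tmul x x * w = (tmul x x * w * (tmul x x)⁻¹) * tmul x x := by group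
    _ = w * tmul x x := by rw [h2]

lemma psi_mem_center (x : G) : tmul x x ∈ Subgroup.center (TS G) :=
  Subgroup.mem_center_iff.mpr fun w => (psi_comm x w).symm

end Aux2


section Aux3
variable {G}

lemma ctr_inv {z : TS G} (h : ∀ w, z * w = w * z) (w : TS G) : z⁻¹ * w = w * z⁻¹ := by
  calc z⁻¹ * w = z⁻¹ * (w * z) * z⁻¹ := by group
    _ = z⁻¹ * (z * w) * z⁻¹ := by rw [h w]
    _ = w * z⁻¹ := by group

lemma star₁ (x g h : G) :
    tmul x (g*h*g⁻¹) * tmul g h = tmul (x*g*x⁻¹) (x*h*x⁻¹) * tmul x h := by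
  have h1 := tmul_rel₁ x g h
  have h2 := tmul_rel₁ g (g⁻¹*x*g) h
  rw [tm_congr (show (g*(g⁻¹*x*g)*g⁻¹ : G) = x by group) (rfl : (g*h*g⁻¹ : G) = g*h*g⁻¹),
    show (g*(g⁻¹*x*g) : G) = x*g by group] at h2
  exact h2.symm.trans h1

lemma psi_conj (x y : G) : tmul (x*y*x⁻¹) (x*y*x⁻¹) = tmul y y := by
  have h1 := star₁ x y y
  rw [tm_congr (rfl : (x:G) = x) (show (y*y*y⁻¹ : G) = y by group)] at h1
  have h2 : tmul y y * tmul x y = tmul (x*y*x⁻¹) (x*y*x⁻¹) * tmul x y :=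
    (psi_comm y (tmul x y)).trans h1
  exact (mul_right_cancel h2).symm

lemma Q0 (a b : G) :
    tmul (a*b) (a*b)
      = tmul (a*b*a⁻¹) a * tmul a a * (tmul (a*(a*b*a⁻¹)*a⁻¹) (a*(a*b*a⁻¹)*a⁻¹) * tmul a (a*b*a⁻¹)) := by
  have s1 := tmul_rel₂ (a*b) a b
  have s3 := tmul_rel₁ a (a*b*a⁻¹) (a*b*a⁻¹)
  have s2 := tmul_rel₁ a b a
  rw [tm_congr (rfl : (a*b*a⁻¹:G) = a*b*a⁻¹) (show (a*a*a⁻¹ : G) = a by group)] at s2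
  rw [tm_congr (show (a*(a*b)*a⁻¹ : G) = a*(a*b*a⁻¹) by group) (rfl : (a*b*a⁻¹:G) = a*b*a⁻¹),
    s3, s2] at s1
  exact s1

lemma Q (u a : G) :
    tmul (u*a) (u*a)
      = tmul u a * tmul a a * (tmul (a*u*a⁻¹) (a*u*a⁻¹) * tmul a u) := by
  have h := Q0 a (a⁻¹*u*a)
  rw [tm_congr (show (a*(a*(a⁻¹*u*a)*a⁻¹)*a⁻¹ : G) = a*u*a⁻¹ by group)
      (show (a*(a*(a⁻¹*u*a)*a⁻¹)*a⁻¹ : G) = a*u*a⁻¹ by group)] at h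
  rw [tm_congr (show (a*(a⁻¹*u*a)*a⁻¹ : G) = u by group) (rfl : (a:G) = a)] at h
  rw [tm_congr (rfl : (a:G) = a) (show (a*(a⁻¹*u*a)*a⁻¹ : G) = u by group)] at h
  rw [tm_congr (show (a*(a⁻¹*u*a) : G) = u*a by group) (show (a*(a⁻¹*u*a) : G) = u*a by group)] at h
  exact h

lemma beta_cf (u a : G) :
    tmul u a * tmul a u
      = tmul (u*a) (u*a) * (tmul a a * tmul (a*u*a⁻¹) (a*u*a⁻¹))⁻¹ := by
  have h1 : tmul u a * tmul a u * (tmul a a * tmul (a*u*a⁻¹) (a*u*a⁻¹)) = tmul (u*a) (u*a) := by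
    rw [Q u a]
    calc tmul u a * tmul a u * (tmul a a * tmul (a*u*a⁻¹) (a*u*a⁻¹))
        = tmul u a * (tmul a u * tmul a a) * tmul (a*u*a⁻¹) (a*u*a⁻¹) := by group
      _ = tmul u a * (tmul a a * tmul a u) * tmul (a*u*a⁻¹) (a*u*a⁻¹) := by
          rw [psi_comm a (tmul a u)]
      _ = tmul u a * tmul a a * (tmul a u * tmul (a*u*a⁻¹) (a*u*a⁻¹)) := by group
      _ = tmul u a * tmul a a * (tmul (a*u*a⁻¹) (a*u*a⁻¹) * tmul a u) := by
          rw [psi_comm (a*u*a⁻¹) (tmul a u)]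
  exact eq_mul_inv_of_mul_eq h1

lemma beta_ctr (u a : G) (w : TS G) :
    (tmul u a * tmul a u) * w = w * (tmul u a * tmul a u) := by
  rw [beta_cf u a]
  calc tmul (u*a) (u*a) * (tmul a a * tmul (a*u*a⁻¹) (a*u*a⁻¹))⁻¹ * w
      = tmul (u*a) (u*a) * ((tmul a a * tmul (a*u*a⁻¹) (a*u*a⁻¹))⁻¹ * w) := by group
    _ = tmul (u*a) (u*a) * (w * (tmul a a * tmul (a*u*a⁻¹) (a*u*a⁻¹))⁻¹) := by
        rw [ctr_inv (fun v => by
          calc tmul a a * tmul (a*u*a⁻¹) (a*u*a⁻¹) * v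
              = tmul a a * (tmul (a*u*a⁻¹) (a*u*a⁻¹) * v) := by group
            _ = tmul a a * (v * tmul (a*u*a⁻¹) (a*u*a⁻¹)) := by rw [psi_comm (a*u*a⁻¹) v]
            _ = (tmul a a * v) * tmul (a*u*a⁻¹) (a*u*a⁻¹) := by group
            _ = (v * tmul a a) * tmul (a*u*a⁻¹) (a*u*a⁻¹) := by rw [psi_comm a v]
            _ = v * (tmul a a * tmul (a*u*a⁻¹) (a*u*a⁻¹)) := by group) w]
    _ = (tmul (u*a) (u*a) * w) * (tmul a a * tmul (a*u*a⁻¹) (a*u*a⁻¹))⁻¹ := by group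
    _ = (w * tmul (u*a) (u*a)) * (tmul a a * tmul (a*u*a⁻¹) (a*u*a⁻¹))⁻¹ := by
        rw [psi_comm (u*a) w]
    _ = w * (tmul (u*a) (u*a) * (tmul a a * tmul (a*u*a⁻¹) (a*u*a⁻¹))⁻¹) := by group

lemma beta_symm (u a : G) : tmul u a * tmul a u = tmul a u * tmul u a := by
  have h := beta_ctr u a (tmul u a)⁻¹
  calc tmul u a * tmul a u = (tmul u a * tmul a u * (tmul u a)⁻¹) * tmul u a := by group
    _ = ((tmul u a)⁻¹ * (tmul u a * tmul a u)) * tmul u a := by rw [h]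
    _ = tmul a u * tmul u a := by group

lemma star₂ (g h z : G) :
    tmul g h * tmul (h*g*h⁻¹) z = tmul g z * tmul (z*g*z⁻¹) (z*h*z⁻¹) := by
  have h1 := tmul_rel₂ g z h
  have h2 := tmul_rel₂ g h (h⁻¹*z*h)
  rw [tm_congr (rfl : (h*g*h⁻¹ : G) = h*g*h⁻¹) (show (h*(h⁻¹*z*h)*h⁻¹ : G) = z by group),
    show (h*(h⁻¹*z*h) : G) = z*h by group] at h2
  exact h2.symm.trans h1

lemma E2 (g h x : G) :
    tmul x (g*h*g⁻¹*h⁻¹)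
      = tmul x (g*h*g⁻¹) *
        (tmul ((g*h*g⁻¹*h⁻¹)*x*(g*h*g⁻¹*h⁻¹)⁻¹) ((g*h*g⁻¹*h⁻¹)*h*(g*h*g⁻¹*h⁻¹)⁻¹))⁻¹ := by
  have h1 := tmul_rel₂ x (g*h*g⁻¹) h⁻¹
  have h2 := tmul_inv_right ((g*h*g⁻¹*h⁻¹)*x*(g*h*g⁻¹*h⁻¹)⁻¹) ((g*h*g⁻¹*h⁻¹)*h*(g*h*g⁻¹*h⁻¹)⁻¹)
  rw [tm_congr
      (show ((g*h*g⁻¹)*x*(g*h*g⁻¹)⁻¹ : G)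
          = ((g*h*g⁻¹*h⁻¹)*h*(g*h*g⁻¹*h⁻¹)⁻¹)*((g*h*g⁻¹*h⁻¹)*x*(g*h*g⁻¹*h⁻¹)⁻¹)*((g*h*g⁻¹*h⁻¹)*h*(g*h*g⁻¹*h⁻¹)⁻¹)⁻¹ by group)
      (show ((g*h*g⁻¹)*h⁻¹*(g*h*g⁻¹)⁻¹ : G) = ((g*h*g⁻¹*h⁻¹)*h*(g*h*g⁻¹*h⁻¹)⁻¹)⁻¹ by group),
    h2] at h1
  exact h1

lemma F2 (g h x : G) :
    tmul x (g*h*g⁻¹*h⁻¹) = tmul (x*g*x⁻¹) (x*h*x⁻¹) * (tmul g h)⁻¹ := by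
  have hs := star₁ x g h
  have hc := tmul_conj g h x h
  have hP : tmul x (g*h*g⁻¹) = tmul (x*g*x⁻¹) (x*h*x⁻¹) * tmul x h * (tmul g h)⁻¹ := by
    rw [← hs]; group
  have hC : tmul ((g*h*g⁻¹*h⁻¹)*x*(g*h*g⁻¹*h⁻¹)⁻¹) ((g*h*g⁻¹*h⁻¹)*h*(g*h*g⁻¹*h⁻¹)⁻¹)
      = tmul g h * tmul x h * (tmul g h)⁻¹ := by
    rw [mul_assoc, ← hc]; group
  rw [E2 g h x, hP, hC]; group

lemma psiK (g h : G) : tmul (g*h*g⁻¹*h⁻¹) (g*h*g⁻¹*h⁻¹) = 1 := by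
  have hc := tmul_conj g h g h
  have hC : tmul ((g*h*g⁻¹*h⁻¹)*g*(g*h*g⁻¹*h⁻¹)⁻¹) ((g*h*g⁻¹*h⁻¹)*h*(g*h*g⁻¹*h⁻¹)⁻¹)
      = tmul g h * tmul g h * (tmul g h)⁻¹ := by
    rw [mul_assoc, ← hc]; group
  rw [F2 g h (g*h*g⁻¹*h⁻¹), hC]; group

lemma E1 (g h x : G) :
    tmul (g*h*g⁻¹*h⁻¹) x
      = (tmul ((g*h*g⁻¹*h⁻¹)*h*(g*h*g⁻¹*h⁻¹)⁻¹) ((g*h*g⁻¹*h⁻¹)*x*(g*h*g⁻¹*h⁻¹)⁻¹))⁻¹ *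
        tmul (g*h*g⁻¹) x := by
  have h1 := tmul_rel₁ (g*h*g⁻¹) h⁻¹ x
  have h2 := tmul_inv_left ((g*h*g⁻¹*h⁻¹)*h*(g*h*g⁻¹*h⁻¹)⁻¹) ((g*h*g⁻¹*h⁻¹)*x*(g*h*g⁻¹*h⁻¹)⁻¹)
  rw [tm_congr
      (show ((g*h*g⁻¹)*h⁻¹*(g*h*g⁻¹)⁻¹ : G) = ((g*h*g⁻¹*h⁻¹)*h*(g*h*g⁻¹*h⁻¹)⁻¹)⁻¹ by group)
      (show ((g*h*g⁻¹)*x*(g*h*g⁻¹)⁻¹ : G)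
          = ((g*h*g⁻¹*h⁻¹)*h*(g*h*g⁻¹*h⁻¹)⁻¹)*((g*h*g⁻¹*h⁻¹)*x*(g*h*g⁻¹*h⁻¹)⁻¹)*((g*h*g⁻¹*h⁻¹)*h*(g*h*g⁻¹*h⁻¹)⁻¹)⁻¹ by group),
    h2] at h1
  exact h1

end Aux3

section Aux4
variable {G}

lemma beta_conj (x g h : G) :
    tmul (x*g*x⁻¹) (x*h*x⁻¹) * tmul (x*h*x⁻¹) (x*g*x⁻¹) = tmul g h * tmul h g := by
  have hx := Q (x*g*x⁻¹) (x*h*x⁻¹)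
  rw [tm_congr (show ((x*g*x⁻¹)*(x*h*x⁻¹) : G) = x*(g*h)*x⁻¹ by group)
      (show ((x*g*x⁻¹)*(x*h*x⁻¹) : G) = x*(g*h)*x⁻¹ by group)] at hx
  rw [tm_congr (show ((x*h*x⁻¹)*(x*g*x⁻¹)*(x*h*x⁻¹)⁻¹ : G) = x*(h*g*h⁻¹)*x⁻¹ by group)
      (show ((x*h*x⁻¹)*(x*g*x⁻¹)*(x*h*x⁻¹)⁻¹ : G) = x*(h*g*h⁻¹)*x⁻¹ by group)] at hx
  rw [psi_conj x (g*h), psi_conj x h, psi_conj x (h*g*h⁻¹)] at hx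
  have h0 := Q g h
  have he := hx.symm.trans h0
  have hL : ∀ A B : TS G,
      A * tmul h h * (tmul (h*g*h⁻¹) (h*g*h⁻¹) * B)
        = A * B * (tmul h h * tmul (h*g*h⁻¹) (h*g*h⁻¹)) := by
    intro A B
    calc A * tmul h h * (tmul (h*g*h⁻¹) (h*g*h⁻¹) * B)
        = A * tmul h h * (B * tmul (h*g*h⁻¹) (h*g*h⁻¹)) := by
          rw [psi_comm (h*g*h⁻¹) B]
      _ = A * (tmul h h * B) * tmul (h*g*h⁻¹) (h*g*h⁻¹) := by group
      _ = A * (B * tmul h h) * tmul (h*g*h⁻¹) (h*g*h⁻¹) := by rw [psi_comm h B]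
      _ = A * B * (tmul h h * tmul (h*g*h⁻¹) (h*g*h⁻¹)) := by group
  rw [hL, hL] at he
  exact mul_right_cancel he

lemma beta_K (g h x : G) :
    tmul x (g*h*g⁻¹*h⁻¹) * tmul (g*h*g⁻¹*h⁻¹) x = 1 := by
  have hs2 := star₂ h g x
  have hV : tmul (g*h*g⁻¹) x = (tmul h g)⁻¹ * (tmul h x * tmul (x*h*x⁻¹) (x*g*x⁻¹)) := by
    rw [← hs2]; group
  have hc := tmul_conj g h h x
  have hC : tmul ((g*h*g⁻¹*h⁻¹)*h*(g*h*g⁻¹*h⁻¹)⁻¹) ((g*h*g⁻¹*h⁻¹)*x*(g*h*g⁻¹*h⁻¹)⁻¹)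
      = tmul g h * tmul h x * (tmul g h)⁻¹ := by
    rw [mul_assoc, ← hc]; group
  rw [F2 g h x, E1 g h x, hV, hC]
  calc tmul (x*g*x⁻¹) (x*h*x⁻¹) * (tmul g h)⁻¹ *
        ((tmul g h * tmul h x * (tmul g h)⁻¹)⁻¹ *
          ((tmul h g)⁻¹ * (tmul h x * tmul (x*h*x⁻¹) (x*g*x⁻¹))))
      = tmul (x*g*x⁻¹) (x*h*x⁻¹) * (tmul h x)⁻¹ *
          ((tmul h g * tmul g h)⁻¹ * tmul h x) * tmul (x*h*x⁻¹) (x*g*x⁻¹) := by group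
    _ = tmul (x*g*x⁻¹) (x*h*x⁻¹) * (tmul h x)⁻¹ *
          (tmul h x * (tmul h g * tmul g h)⁻¹) * tmul (x*h*x⁻¹) (x*g*x⁻¹) := by
        rw [ctr_inv (beta_ctr h g) (tmul h x)]
    _ = tmul (x*g*x⁻¹) (x*h*x⁻¹) * ((tmul h g * tmul g h)⁻¹ * tmul (x*h*x⁻¹) (x*g*x⁻¹)) := by
        group
    _ = tmul (x*g*x⁻¹) (x*h*x⁻¹) * (tmul (x*h*x⁻¹) (x*g*x⁻¹) * (tmul h g * tmul g h)⁻¹) := by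
        rw [ctr_inv (beta_ctr h g) (tmul (x*h*x⁻¹) (x*g*x⁻¹))]
    _ = tmul (x*g*x⁻¹) (x*h*x⁻¹) * tmul (x*h*x⁻¹) (x*g*x⁻¹) * (tmul h g * tmul g h)⁻¹ := by
        group
    _ = tmul g h * tmul h g * (tmul h g * tmul g h)⁻¹ := by rw [beta_conj x g h]
    _ = 1 := by rw [beta_symm g h]; group

lemma psi_mul_comm (x g h : G) :
    tmul (x*(g*h*g⁻¹*h⁻¹)) (x*(g*h*g⁻¹*h⁻¹)) = tmul x x := by
  have hQ := Q x (g*h*g⁻¹*h⁻¹)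
  rw [psiK g h, psi_conj (g*h*g⁻¹*h⁻¹) x] at hQ
  rw [hQ]
  calc tmul x (g*h*g⁻¹*h⁻¹) * 1 * (tmul x x * tmul (g*h*g⁻¹*h⁻¹) x)
      = tmul x (g*h*g⁻¹*h⁻¹) * (tmul x x * tmul (g*h*g⁻¹*h⁻¹) x) := by group
    _ = tmul x (g*h*g⁻¹*h⁻¹) * (tmul (g*h*g⁻¹*h⁻¹) x * tmul x x) := by
        rw [psi_comm x (tmul (g*h*g⁻¹*h⁻¹) x)]
    _ = tmul x (g*h*g⁻¹*h⁻¹) * tmul (g*h*g⁻¹*h⁻¹) x * tmul x x := by group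
    _ = tmul x x := by rw [beta_K g h x]; group

lemma psi_mul_commutator {c : G} (hc : c ∈ commutator G) :
    ∀ x : G, tmul (x*c) (x*c) = (tmul x x : TS G) := by
  rw [commutator_eq_closure] at hc
  refine Subgroup.closure_induction
    (p := fun c _ => ∀ x : G, tmul (x*c) (x*c) = (tmul x x : TS G)) ?_ ?_ ?_ ?_ hc
  · rintro c ⟨g, h, rfl⟩ x
    rw [commutatorElement_def]
    exact psi_mul_comm x g h
  · intro x
    rw [tm_congr (mul_one x) (mul_one x)]
  · rintro c₁ c₂ _ _ h₁ h₂ x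
    calc tmul (x*(c₁*c₂)) (x*(c₁*c₂)) = tmul ((x*c₁)*c₂) ((x*c₁)*c₂) :=
          tm_congr (by group) (by group)
      _ = tmul (x*c₁) (x*c₁) := h₂ (x*c₁)
      _ = tmul x x := h₁ x
  · rintro c _ h x
    have h2 := h (x*c⁻¹)
    rw [tm_congr (show (x*c⁻¹*c : G) = x by group) (show (x*c⁻¹*c : G) = x by group)] at h2
    exact h2.symm

lemma nabla_eq_closure' :
    nabla G = Subgroup.closure {t : TS G | ∃ x : G, t = tmul x x} := by
  have hle : Subgroup.closure {t : TS G | ∃ x : G, t = tmul x x} ≤ Subgroup.center (TS G) :=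
    (Subgroup.closure_le _).mpr (by rintro t ⟨x, rfl⟩; exact psi_mem_center x)
  have hnormal : (Subgroup.closure {t : TS G | ∃ x : G, t = tmul x x}).Normal := by
    constructor
    intro n hn g
    have hcomm := Subgroup.mem_center_iff.mp (hle hn) g
    have h2 : g * n * g⁻¹ = n := by rw [hcomm]; group
    rw [h2]; exact hn
  exact le_antisymm (Subgroup.normalClosure_le_normal Subgroup.subset_closure)
    ((Subgroup.closure_le _).mpr fun t ht => Subgroup.subset_normalClosure ht)

end Aux4

end NATensor

open NATensor in
/-- if the derived subgroup `[G,G]` has a complement `B` in `G`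
(`G = [G,G]B` and `[G,G] ∩ B = 1`), then `∇(G) ≅ ∇(G_ab)`. -/
theorem nabla_iso_nabla_abelianization (G : Type*) [Group G]
    (B : Subgroup G) (hB1 : commutator G ⊔ B = ⊤) (hB2 : commutator G ⊓ B = ⊥) :
    Nonempty (↥(nabla G) ≃* ↥(nabla (Abelianization G))) := by
  classical
  set π : G →* Abelianization G := Abelianization.of with hπdef
  have hker : ∀ g : G, π g = 1 ↔ g ∈ commutator G := fun g => QuotientGroup.eq_one_iff g
  set e : B →* Abelianization G := π.comp B.subtype with hedef
  have hinj : Function.Injective e := by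
    refine (injective_iff_map_eq_one e).mpr ?_
    intro b hb
    have hbc : (b : G) ∈ commutator G := (hker b).mp hb
    have hmem : (b : G) ∈ commutator G ⊓ B := ⟨hbc, b.2⟩
    rw [hB2] at hmem
    exact Subtype.ext (by simpa using hmem)
  have hsurj : Function.Surjective e := by
    intro a
    obtain ⟨g, rfl⟩ : ∃ g : G, π g = a := QuotientGroup.mk_surjective a
    have hg : g ∈ commutator G ⊔ B := hB1 ▸ Subgroup.mem_top g
    have hg' : g ∈ ((commutator G ⊔ B : Subgroup G) : Set G) := hg
    obtain ⟨c, hc, b, hb, rfl⟩ := Set.mem_mul.mp ((Subgroup.normal_mul (commutator G) B) ▸ hg')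
    refine ⟨⟨b, hb⟩, ?_⟩
    show π b = π (c * b)
    rw [map_mul, (hker c).mpr hc, one_mul]
  set eq : B ≃* Abelianization G := MulEquiv.ofBijective e ⟨hinj, hsurj⟩ with heqdef
  set σ : Abelianization G →* G := B.subtype.comp eq.symm.toMonoidHom with hσdef
  have hπσ : ∀ a, π (σ a) = a := by
    intro a
    show π (B.subtype (eq.symm a)) = a
    have h1 : e (eq.symm a) = a := eq.apply_symm_apply a
    exact h1
  have hσπ : ∀ x : G, tmul (σ (π x)) (σ (π x)) = (tmul x x : TS G) := by
    intro x
    have h1 : π (x⁻¹ * σ (π x)) = 1 := by rw [map_mul, map_inv, hπσ]; group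
    have h2 : x⁻¹ * σ (π x) ∈ commutator G := (hker _).mp h1
    calc tmul (σ (π x)) (σ (π x))
        = tmul (x * (x⁻¹ * σ (π x))) (x * (x⁻¹ * σ (π x))) := tm_congr (by group) (by group)
      _ = tmul x x := psi_mul_commutator h2 x
  set Φ : TS G →* TS (Abelianization G) := tmap π with hΦdef
  set Ψ : TS (Abelianization G) →* TS G := tmap σ with hΨdef
  have hΦmem : ∀ w ∈ nabla G, Φ w ∈ nabla (Abelianization G) := by
    intro w hw
    rw [nabla_eq_closure'] at hw ⊢
    refine Subgroup.closure_induction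
      (p := fun w _ => Φ w ∈ Subgroup.closure {t : TS (Abelianization G) | ∃ x, t = tmul x x})
      ?_ ?_ ?_ ?_ hw
    · rintro t ⟨x, rfl⟩
      rw [hΦdef, tmap_tmul]
      exact Subgroup.subset_closure ⟨π x, rfl⟩
    · simp only [map_one]; exact one_mem _
    · intro a b _ _ ha hb; simp only [map_mul]; exact mul_mem ha hb
    · intro a _ ha; simp only [map_inv]; exact inv_mem ha
  have hΨmem : ∀ w ∈ nabla (Abelianization G), Ψ w ∈ nabla G := by
    intro w hw
    rw [nabla_eq_closure'] at hw ⊢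
    refine Subgroup.closure_induction
      (p := fun w _ => Ψ w ∈ Subgroup.closure {t : TS G | ∃ x, t = tmul x x})
      ?_ ?_ ?_ ?_ hw
    · rintro t ⟨a, rfl⟩
      rw [hΨdef, tmap_tmul]
      exact Subgroup.subset_closure ⟨σ a, rfl⟩
    · simp only [map_one]; exact one_mem _
    · intro a b _ _ ha hb; simp only [map_mul]; exact mul_mem ha hb
    · intro a _ ha; simp only [map_inv]; exact inv_mem ha
  have hΨΦ : ∀ w ∈ nabla G, Ψ (Φ w) = w := by
    intro w hw
    rw [nabla_eq_closure'] at hw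
    refine Subgroup.closure_induction (p := fun w _ => Ψ (Φ w) = w) ?_ ?_ ?_ ?_ hw
    · rintro t ⟨x, rfl⟩
      rw [hΦdef, hΨdef, tmap_tmul, tmap_tmul]
      exact hσπ x
    · simp only [map_one]
    · intro a b _ _ ha hb; simp only [map_mul, ha, hb]
    · intro a _ ha; simp only [map_inv, ha]
  have hΦΨ : ∀ w ∈ nabla (Abelianization G), Φ (Ψ w) = w := by
    intro w hw
    rw [nabla_eq_closure'] at hw
    refine Subgroup.closure_induction (p := fun w _ => Φ (Ψ w) = w) ?_ ?_ ?_ ?_ hw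
    · rintro t ⟨a, rfl⟩
      rw [hΨdef, hΦdef, tmap_tmul, tmap_tmul, hπσ]
    · simp only [map_one]
    · intro a b _ _ ha hb; simp only [map_mul, ha, hb]
    · intro a _ ha; simp only [map_inv, ha]
  exact ⟨{ toFun := fun w => ⟨Φ ↑w, hΦmem ↑w w.2⟩
           invFun := fun w => ⟨Ψ ↑w, hΨmem ↑w w.2⟩
           left_inv := fun w => Subtype.ext (hΨΦ ↑w w.2)
           right_inv := fun w => Subtype.ext (hΦΨ ↑w w.2)
           map_mul' := fun w₁ w₂ => Subtype.ext (by simp [map_mul]) }⟩
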